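/- arXiv:2306.08504 — 2 statements merged into one kernel-verified Lean document; each statement's English description precedes it below -/
import Mathlib

section
/- Let E be a real normed vector space of dimension 2 (finrank ℝ E = 2), let P be a finite nonempty subset of E, and let y ∈ E be any point. Then there exists a minimum spanning tree T of P ∪ {y} with respect to the distance ‖x − z‖ in which y has at most six neighbours. -/
open scoped BigOperators

noncomputable section

variable {E : Type*} [NormedAddCommGroup E]

/-- The length of an edge (an unordered pair of points): the norm distance
`‖x - z‖` between its endpoints. -/
def edgeLen : Sym2 E → ℝ :=
  Sym2.lift ⟨fun a b => dist a b, fun a b => dist_comm a b⟩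

/-- The total length of a graph: the sum of the lengths of its edges. -/
def glength (G : SimpleGraph E) : ℝ := ∑ᶠ e ∈ G.edgeSet, edgeLen e

/-- `G` is a spanning tree of the point set `V`: all its edges join points of
`V`, it is acyclic, and all points of `V` are pairwise connected in `G`. -/
def IsSpanningTreeOn (V : Set E) (G : SimpleGraph E) : Prop :=
  (∀ ⦃x y : E⦄, G.Adj x y → x ∈ V ∧ y ∈ V) ∧ G.IsAcyclic ∧
    ∀ x ∈ V, ∀ y ∈ V, G.Reachable x y

/-- `G` is a minimum spanning tree of the point set `V`. -/
def IsMSTOn (V : Set E) (G : SimpleGraph E) : Prop :=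
  IsSpanningTreeOn V G ∧
    ∀ H : SimpleGraph E, IsSpanningTreeOn V H → glength G ≤ glength H

open SimpleGraph

set_option linter.unusedSectionVars false
set_option linter.unusedTactic false
set_option linter.unusedVariables false
set_option linter.deprecated false

variable [NormedSpace ℝ E]

/-- Monotonicity lemma in normed spaces. -/
lemma mst_mono {x y z : E} (hx : ‖x‖ = 1) (hy : ‖y‖ = 1) (hz : ‖z‖ = 1)
    {α β : ℝ} (hα : 0 ≤ α) (hβ : 0 ≤ β) (hxy : y = α • x + β • z) :
    ‖x - y‖ ≤ ‖x - z‖ := by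
  have hαβ : 1 ≤ α + β := by
    have : ‖y‖ ≤ α * ‖x‖ + β * ‖z‖ := by
      rw [hxy]
      refine (norm_add_le _ _).trans ?_
      rw [norm_smul, norm_smul, Real.norm_eq_abs, Real.norm_eq_abs, abs_of_nonneg hα,
        abs_of_nonneg hβ]
    rw [hx, hy, hz] at this; linarith
  have hc : (0:ℝ) < α + β := by linarith
  set c := α + β with hcdef
  set s : ℝ := β / c with hs
  set t : ℝ := 1 / c with ht
  have hs0 : 0 ≤ s := div_nonneg hβ hc.le
  have hs1 : s ≤ 1 := by
    rw [hs, div_le_one hc]; linarith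
  have ht0 : 0 < t := by positivity
  have ht1 : t ≤ 1 := by rw [ht, div_le_one hc]; exact hαβ
  set p : E := (1 - s) • x + s • z with hp
  have hpy : p = t • y := by
    rw [hp, hxy, smul_add, smul_smul, smul_smul]
    congr 2
    · congr 1
      rw [hs, ht]; field_simp; rw [hcdef]; ring
    · congr 1
      rw [ht, hs]; field_simp
  have h1 : ‖x - p‖ = s * ‖x - z‖ := by
    have : x - p = s • (x - z) := by
      rw [hp]; module
    rw [this, norm_smul, Real.norm_eq_abs, abs_of_nonneg hs0]
  have h2 : ‖p - y‖ = 1 - t := by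
    have : p - y = -((1 - t) • y) := by
      rw [hpy]; module
    rw [this, norm_neg, norm_smul, Real.norm_eq_abs, abs_of_nonneg (by linarith), hy, mul_one]
  have h3 : 1 - t ≤ (1 - s) * ‖x - z‖ := by
    have hpz : p = z + (1 - s) • (x - z) := by rw [hp]; module
    have : ‖p‖ ≥ ‖z‖ - (1 - s) * ‖x - z‖ := by
      calc ‖z‖ - (1-s) * ‖x - z‖ = ‖z‖ - ‖(1 - s) • (x - z)‖ := by
            rw [norm_smul, Real.norm_eq_abs, abs_of_nonneg (by linarith)]
        _ ≤ ‖z + (1 - s) • (x - z)‖ := by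
            have := norm_add_le (z + (1-s) • (x-z)) (-((1-s) • (x-z)))
            simp only [add_neg_cancel_right, norm_neg] at this
            linarith
        _ = ‖p‖ := by rw [hpz]
    have hnp : ‖p‖ = t := by
      rw [hpy, norm_smul, Real.norm_eq_abs, abs_of_nonneg ht0.le, hy, mul_one]
    rw [hnp] at this; rw [hz] at this; linarith
  calc ‖x - y‖ ≤ ‖x - p‖ + ‖p - y‖ := by
        have := norm_add_le (x - p) (p - y)
        simpa using this
    _ = s * ‖x - z‖ + (1 - t) := by rw [h1, h2]
    _ ≤ s * ‖x - z‖ + (1 - s) * ‖x - z‖ := by linarith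
    _ = ‖x - z‖ := by ring

/-- `w` lies in the (closed convex) cone spanned by `p` and `q`. -/
def InCone (p q w : E) : Prop := ∃ a b : ℝ, 0 ≤ a ∧ 0 ≤ b ∧ w = a • p + b • q

lemma inCone_symm {p q w : E} (h : InCone p q w) : InCone q p w := by
  obtain ⟨a, b, ha, hb, hw⟩ := h
  exact ⟨b, a, hb, ha, by rw [hw, add_comm]⟩

/-- Two unit vectors in the cone of two unit vectors at distance one are
at distance at most one. -/
lemma same_cone_dist {p q x yy : E} (hp : ‖p‖ = 1) (hq : ‖q‖ = 1) (hpq : ‖p - q‖ = 1)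
    (hx : ‖x‖ = 1) (hy : ‖yy‖ = 1) (hcx : InCone p q x) (hcy : InCone p q yy) :
    ‖x - yy‖ ≤ 1 := by
  -- first a helper handling the ordered case (det ≥ 0)
  suffices H : ∀ p q x yy : E, ‖p‖ = 1 → ‖q‖ = 1 → ‖p - q‖ = 1 → ‖x‖ = 1 → ‖yy‖ = 1 →
      ∀ a b c d : ℝ, 0 ≤ a → 0 ≤ b → 0 ≤ c → 0 ≤ d → x = a • p + b • q → yy = c • p + d • q →
      b * c ≤ a * d → ‖x - yy‖ ≤ 1 by
    obtain ⟨a, b, ha, hb, hxe⟩ := hcx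
    obtain ⟨c, d, hc, hd, hye⟩ := hcy
    rcases le_total (b * c) (a * d) with hdet | hdet
    · exact H p q x yy hp hq hpq hx hy a b c d ha hb hc hd hxe hye hdet
    · rw [norm_sub_rev]
      exact H p q yy x hp hq hpq hy hx c d a b hc hd ha hb hye hxe (by linarith)
  intro p q x yy hp hq hpq hx hy a b c d ha hb hc hd hxe hye hdet
  have key2 : ‖x - q‖ ≤ 1 := by
    -- x ∈ cone(p,q) : ‖q - x‖ ≤ ‖q - p‖ = 1
    have := mst_mono (x := q) (y := x) (z := p) hq hx hp hb ha
      (by rw [hxe, add_comm])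
    rw [norm_sub_rev q p, hpq] at this
    rwa [norm_sub_rev]
  rcases eq_or_lt_of_le ha with ha0 | ha0
  · -- a = 0 : x = q
    have hxq : x = q := by
      have hb1 : b = 1 := by
        have : ‖x‖ = b := by
          rw [hxe, ← ha0, zero_smul, zero_add, norm_smul, Real.norm_eq_abs,
            abs_of_nonneg hb, hq, mul_one]
        rw [hx] at this; linarith
      rw [hxe, ← ha0, hb1]; simp
    rw [hxq]
    -- ‖q - yy‖ ≤ ‖q - p‖ = 1
    have := mst_mono (x := q) (y := yy) (z := p) hq hy hp hd hc (by rw [hye, add_comm])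
    rw [norm_sub_rev q p, hpq] at this
    exact this
  · -- a > 0 : yy ∈ cone(x, q)
    have hye' : yy = (c / a) • x + ((a * d - b * c) / a) • q := by
      rw [hxe, hye, smul_add, smul_smul, smul_smul, add_assoc, ← add_smul]
      have e1 : c / a * a = c := by field_simp
      have e2 : c / a * b + (a * d - b * c) / a = d := by field_simp; ring
      rw [e1, e2]
    have h1 : ‖x - yy‖ ≤ ‖x - q‖ :=
      mst_mono hx hy hq (div_nonneg hc ha0.le)
        (div_nonneg (by linarith) ha0.le) hye'
    exact h1.trans key2

/-- In a plane there exist two unit vectors at distance one. -/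
lemma exists_hex (hdim : Module.finrank ℝ E = 2) :
    ∃ h h' : E, ‖h‖ = 1 ∧ ‖h'‖ = 1 ∧ ‖h - h'‖ = 1 := by
  have hnt : Nontrivial E := Module.nontrivial_of_finrank_pos (R := ℝ) (by omega)
  have hrank : Module.rank ℝ E = 2 := by
    have hfin : FiniteDimensional ℝ E := by
      have : Module.finrank ℝ E ≠ 0 := by omega
      exact FiniteDimensional.of_finrank_pos (by omega)
    rw [← Module.finrank_eq_rank, hdim]; norm_num
  obtain ⟨h, hh⟩ := NormedSpace.sphere_nonempty (E := E) (x := 0) (r := 1) |>.mpr zero_le_one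
  have hh1 : ‖h‖ = 1 := by simpa using mem_sphere_zero_iff_norm.mp hh
  have hcon : IsConnected (Metric.sphere (0:E) 1) :=
    isConnected_sphere (by rw [hrank]; norm_num) 0 zero_le_one
  have hmem2 : -h ∈ Metric.sphere (0:E) 1 := by
    simpa [mem_sphere_zero_iff_norm] using hh1
  have hcont : ContinuousOn (fun v : E => ‖h - v‖) (Metric.sphere (0:E) 1) :=
    (continuous_const.sub continuous_id).norm.continuousOn
  have := hcon.isPreconnected.intermediate_value hh hmem2 hcont
  have h2 : ‖h - -h‖ = 2 := by
    rw [sub_neg_eq_add, ← two_smul ℝ, norm_smul]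
    simp [hh1]
  have h1mem : (1:ℝ) ∈ Set.Icc ‖h - h‖ ‖h - -h‖ := by
    rw [h2, sub_self, norm_zero]; constructor <;> norm_num
  obtain ⟨h', hh', hval⟩ := this h1mem
  exact ⟨h, h', hh1, by simpa using mem_sphere_zero_iff_norm.mp hh', hval⟩

/-- Six cones built out of a hexagon cover the plane. -/
lemma cone_cover (hdim : Module.finrank ℝ E = 2) {h h' : E}
    (hh : ‖h‖ = 1) (hh' : ‖h'‖ = 1) (hd : ‖h - h'‖ = 1) (w : E) :
    ∃ i : Fin 6, InCone (![h, h', h' - h, -h, -h', h - h'] i)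
      (![h, h', h' - h, -h, -h', h - h'] (i + 1)) w := by
  -- h, h' are linearly independent
  have hli : LinearIndependent ℝ ![h, h'] := by
    rw [LinearIndependent.pair_iff' (by intro h0; rw [h0] at hh; simp at hh)]
    intro a hah
    have : |a| = 1 := by
      have := congrArg norm hah
      rwa [norm_smul, Real.norm_eq_abs, hh, hh', mul_one] at this
    rcases abs_eq (by norm_num : (0:ℝ) ≤ 1) |>.mp this with rfl | rfl
    · rw [one_smul] at hah; rw [hah] at hd; simp at hd
    · rw [← hah, neg_one_smul, sub_neg_eq_add, ← two_smul ℝ, norm_smul] at hd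
      rw [hh] at hd; norm_num at hd
  have hcard : Fintype.card (Fin 2) = Module.finrank ℝ E := by simp [hdim]
  let B := basisOfLinearIndependentOfCardEqFinrank hli hcard
  have hB : ∀ i, B i = ![h, h'] i := fun i => by
    simp [B, coe_basisOfLinearIndependentOfCardEqFinrank]
  have hw : w = (B.repr w 0) • h + (B.repr w 1) • h' := by
    conv_lhs => rw [← B.sum_repr w]
    rw [Fin.sum_univ_two, hB 0, hB 1]
    simp
  set s := B.repr w 0
  set t := B.repr w 1
  rcases le_total 0 s with hs | hs <;> rcases le_total 0 t with ht | ht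
  · exact ⟨0, s, t, hs, ht, by simpa using hw⟩
  · -- s ≥ 0, t ≤ 0
    rcases le_total 0 (s + t) with hst | hst
    · refine ⟨5, -t, s + t, by linarith, hst, ?_⟩
      show w = (-t) • (h - h') + (s + t) • h
      rw [hw]; module
    · refine ⟨4, -t - s, s, by linarith, hs, ?_⟩
      show w = (-t - s) • (-h') + s • (h - h')
      rw [hw]; module
  · -- s ≤ 0, t ≥ 0
    rcases le_total 0 (s + t) with hst | hst
    · refine ⟨1, s + t, -s, hst, by linarith, ?_⟩
      show w = (s + t) • h' + (-s) • (h' - h)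
      rw [hw]; module
    · refine ⟨2, t, -s - t, ht, by linarith, ?_⟩
      show w = t • (h' - h) + (-s - t) • (-h)
      rw [hw]; module
  · refine ⟨3, -s, -t, by linarith, by linarith, ?_⟩
    show w = (-s) • (-h) + (-t) • (-h')
    rw [hw]; module

/-- Among any seven unit vectors in the plane, two are at distance at most 1. -/
lemma seven_unit (hdim : Module.finrank ℝ E = 2) (g : Fin 7 → E)
    (hg : ∀ i, ‖g i‖ = 1) : ∃ i j, i ≠ j ∧ ‖g i - g j‖ ≤ 1 := by
  obtain ⟨h, h', hh, hh', hd⟩ := exists_hex hdim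
  set hex : Fin 6 → E := ![h, h', h' - h, -h, -h', h - h'] with hhex
  have hexnorm : ∀ i : Fin 6, ‖hex i‖ = 1 := by
    intro i; fin_cases i
    · exact hh
    · exact hh'
    · show ‖h' - h‖ = 1; rw [norm_sub_rev]; exact hd
    · show ‖-h‖ = 1; rw [norm_neg]; exact hh
    · show ‖-h'‖ = 1; rw [norm_neg]; exact hh'
    · exact hd
  have hexedge : ∀ i : Fin 6, ‖hex i - hex (i + 1)‖ = 1 := by
    intro i; fin_cases i
    · exact hd
    · show ‖h' - (h' - h)‖ = 1; rw [sub_sub_cancel]; exact hh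
    · show ‖h' - h - -h‖ = 1; rw [sub_neg_eq_add, sub_add_cancel]; exact hh'
    · show ‖-h - -h'‖ = 1
      have e : -h - -h' = h' - h := by module
      rw [e, norm_sub_rev]; exact hd
    · show ‖-h' - (h - h')‖ = 1
      have e : -h' - (h - h') = -h := by module
      rw [e, norm_neg]; exact hh
    · show ‖h - h' - h‖ = 1
      have e : h - h' - h = -h' := by module
      rw [e, norm_neg]; exact hh'
  have hcov : ∀ w : E, ∃ i : Fin 6, InCone (hex i) (hex (i + 1)) w :=
    fun w => cone_cover hdim hh hh' hd w
  let F : Fin 7 → Fin 6 := fun j => (hcov (g j)).choose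
  obtain ⟨i, j, hij, hFij⟩ := Fintype.exists_ne_map_eq_of_card_lt F (by norm_num)
  refine ⟨i, j, hij, ?_⟩
  have h1 := (hcov (g i)).choose_spec
  have h2 := (hcov (g j)).choose_spec
  rw [show (hcov (g j)).choose = (hcov (g i)).choose from hFij.symm] at h2
  exact same_cone_dist (hexnorm _) (hexnorm _) (hexedge _) (hg i) (hg j) h1 h2

/-- Among any seven distinct nonzero vectors in the plane, two whose difference
is at most the max of their norms. -/
lemma seven_main (hdim : Module.finrank ℝ E = 2) (f : Fin 7 → E)
    (h0 : ∀ i, f i ≠ 0) (hinj : Function.Injective f) :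
    ∃ i j, i ≠ j ∧ ‖f i - f j‖ ≤ max ‖f i‖ ‖f j‖ := by
  set g : Fin 7 → E := fun i => ‖f i‖⁻¹ • f i with hg
  have hgu : ∀ i, ‖g i‖ = 1 := by
    intro i
    rw [hg, norm_smul, Real.norm_eq_abs, abs_of_nonneg (by positivity),
      inv_mul_cancel₀ (norm_ne_zero_iff.mpr (h0 i))]
  have hfg : ∀ i, f i = ‖f i‖ • g i := by
    intro i
    rw [hg, smul_smul, mul_inv_cancel₀ (norm_ne_zero_iff.mpr (h0 i)), one_smul]
  -- key step: find i ≠ j with ‖g i - g j‖ ≤ 1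
  have key : ∃ i j, i ≠ j ∧ ‖g i - g j‖ ≤ 1 := by
    by_cases hginj : Function.Injective g
    · exact seven_unit hdim g hgu
    · simp only [Function.Injective, not_forall] at hginj
      obtain ⟨i, j, hgij, hij⟩ := hginj
      exact ⟨i, j, hij, by rw [hgij, sub_self, norm_zero]; norm_num⟩
  obtain ⟨i, j, hij, hle⟩ := key
  -- wlog ‖f i‖ ≤ ‖f j‖
  suffices H : ∀ i j, i ≠ j → ‖g i - g j‖ ≤ 1 → ‖f i‖ ≤ ‖f j‖ →
      ‖f i - f j‖ ≤ max ‖f i‖ ‖f j‖ by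
    rcases le_total ‖f i‖ ‖f j‖ with hle' | hle'
    · exact ⟨i, j, hij, H i j hij hle hle'⟩
    · refine ⟨j, i, hij.symm, H j i hij.symm (by rwa [norm_sub_rev]) hle'⟩
  intro i j hij hle hle'
  have hri : (0:ℝ) ≤ ‖f i‖ := norm_nonneg _
  have edecomp : f i - f j = ‖f i‖ • (g i - g j) + (‖f i‖ - ‖f j‖) • g j := by
    conv_lhs => rw [hfg i, hfg j]
    module
  calc ‖f i - f j‖ = ‖‖f i‖ • (g i - g j) + (‖f i‖ - ‖f j‖) • g j‖ := by
        rw [edecomp]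
    _ ≤ ‖‖f i‖ • (g i - g j)‖ + ‖(‖f i‖ - ‖f j‖) • g j‖ := norm_add_le _ _
    _ = ‖f i‖ * ‖g i - g j‖ + |‖f i‖ - ‖f j‖| := by
        rw [norm_smul, norm_smul, Real.norm_eq_abs, Real.norm_eq_abs, abs_of_nonneg hri,
          hgu j, mul_one]
    _ ≤ ‖f i‖ * 1 + (‖f j‖ - ‖f i‖) := by
        have : |‖f i‖ - ‖f j‖| = ‖f j‖ - ‖f i‖ := by
          rw [abs_of_nonpos (by linarith)]; ring
        rw [this]
        have := mul_le_mul_of_nonneg_left hle hri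
        linarith
    _ = ‖f j‖ := by ring
    _ ≤ max ‖f i‖ ‖f j‖ := le_max_right _ _

/-- Deleting one edge, every vertex reachable from `x` is still reachable
from `x`, or one of the two endpoints of the deleted edge is. -/
lemma reach_delete_cases {G : SimpleGraph V} {v w : V} :
    ∀ {x b : V}, G.Walk x b →
      (G.deleteEdges {s(v, w)}).Reachable x b ∨
      (G.deleteEdges {s(v, w)}).Reachable x v ∨
      (G.deleteEdges {s(v, w)}).Reachable x w := by
  intro x b p
  induction p with
  | nil => exact Or.inl (Reachable.refl _)
  | @cons x z b h q ih =>
    by_cases he : s(x, z) = s(v, w)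
    · rw [Sym2.eq_iff] at he
      rcases he with ⟨rfl, rfl⟩ | ⟨rfl, rfl⟩
      · exact Or.inr (Or.inl (Reachable.refl _))
      · exact Or.inr (Or.inr (Reachable.refl _))
    · have hadj : (G.deleteEdges {s(v, w)}).Adj x z := by
        rw [deleteEdges_adj]
        exact ⟨h, by simpa using he⟩
      rcases ih with h' | h' | h'
      · exact Or.inl (hadj.reachable.trans h')
      · exact Or.inr (Or.inl (hadj.reachable.trans h'))
      · exact Or.inr (Or.inr (hadj.reachable.trans h'))

/-- Walking in `G` with one extra edge `s(u,v)`: either the endpoints were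
already reachable, or the walk passes through the new edge. -/
lemma reach_sup_cases {G : SimpleGraph V} {u v : V} :
    ∀ {a b : V}, (G ⊔ SimpleGraph.fromEdgeSet {s(u, v)}).Walk a b →
      G.Reachable a b ∨ (G.Reachable a u ∧ G.Reachable v b) ∨
        (G.Reachable a v ∧ G.Reachable u b) := by
  intro a b p
  induction p with
  | nil => exact Or.inl (Reachable.refl _)
  | @cons a z b h q ih =>
    rcases (sup_adj _ _ _ _).mp h with hG | hnew
    · rcases ih with h' | ⟨h1, h2⟩ | ⟨h1, h2⟩
      · exact Or.inl (hG.reachable.trans h')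
      · exact Or.inr (Or.inl ⟨hG.reachable.trans h1, h2⟩)
      · exact Or.inr (Or.inr ⟨hG.reachable.trans h1, h2⟩)
    · rw [fromEdgeSet_adj] at hnew
      have he := hnew.1
      simp only [Set.mem_singleton_iff, Sym2.eq_iff] at he
      rcases he with ⟨rfl, rfl⟩ | ⟨rfl, rfl⟩
      · -- a = u, z = v
        rcases ih with h' | ⟨h1, h2⟩ | ⟨h1, h2⟩
        · exact Or.inr (Or.inl ⟨Reachable.refl _, h'⟩)
        · exact Or.inr (Or.inl ⟨Reachable.refl _, h2⟩)
        · exact Or.inl h2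
      · -- a = v, z = u
        rcases ih with h' | ⟨h1, h2⟩ | ⟨h1, h2⟩
        · exact Or.inr (Or.inr ⟨Reachable.refl _, h'⟩)
        · exact Or.inl h2
        · exact Or.inr (Or.inr ⟨Reachable.refl _, h2⟩)

lemma edgeSet_subset_of_mem {V : Set E} (hV : V.Finite) {T : SimpleGraph E}
    (hTV : ∀ ⦃x y : E⦄, T.Adj x y → x ∈ V ∧ y ∈ V) :
    T.edgeSet ⊆ ↑(hV.toFinset.sym2) := by
  intro e he
  induction e with
  | _ a b =>
    rw [mem_edgeSet] at he
    obtain ⟨ha, hb⟩ := hTV he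
    simp only [Finset.mem_coe, Finset.mem_sym2_iff, Sym2.mem_iff]
    rintro x (rfl | rfl) <;> simp [Set.Finite.mem_toFinset, ha, hb]

/-- The star centred at `y` is a spanning tree of `insert y ↑P`. -/
lemma star_spanning (P : Finset E) (y : E) :
    ∃ G : SimpleGraph E, IsSpanningTreeOn (insert y ↑P) G := by
  set s : Set (Sym2 E) := {e | ∃ p ∈ (P : Set E), p ≠ y ∧ e = s(y, p)} with hs
  refine ⟨fromEdgeSet s, ?_, ?_, ?_⟩
  · intro a b hab
    rw [fromEdgeSet_adj] at hab
    obtain ⟨⟨p, hp, hpy, hab'⟩, -⟩ := hab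
    rcases Sym2.eq_iff.mp hab' with ⟨rfl, rfl⟩ | ⟨rfl, rfl⟩
    · exact ⟨Set.mem_insert _ _, Set.mem_insert_of_mem _ hp⟩
    · exact ⟨Set.mem_insert_of_mem _ hp, Set.mem_insert _ _⟩
  · rw [isAcyclic_iff_forall_adj_isBridge]
    intro a b hab
    rw [isBridge_iff]
    rw [fromEdgeSet_adj] at hab
    obtain ⟨⟨p, hp, hpy, hab'⟩, hne⟩ := hab
    -- in the deleted graph, p is isolated
    have hiso : ∀ z : E, ¬((fromEdgeSet s) \ fromEdgeSet {s(a, b)}).Adj p z := by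
      intro z hz
      rcases hz with ⟨hz1, hz2⟩
      rw [fromEdgeSet_adj] at hz1 hz2
      obtain ⟨⟨q, hq, hqy, hzq⟩, hnez⟩ := hz1
      rcases Sym2.eq_iff.mp hzq with ⟨hpy', -⟩ | ⟨rfl, rfl⟩
      · exact hpy hpy'
      · apply hz2
        refine ⟨?_, hnez⟩
        simp only [Set.mem_singleton_iff]
        rw [hab']
        exact Sym2.eq_swap
    have hnr : ∀ z : E, z ≠ p → ¬((fromEdgeSet s) \ fromEdgeSet {s(a, b)}).Reachable p z := by
      intro z hzp hr
      obtain ⟨w⟩ := hr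
      cases w with
      | nil => exact hzp rfl
      | cons h q => exact hiso _ h
    rcases Sym2.eq_iff.mp hab' with ⟨rfl, rfl⟩ | ⟨rfl, rfl⟩
    · exact fun hr => hnr _ hne hr.symm
    · exact fun hr => hnr _ (Ne.symm hne) hr
  · -- connectivity
    have hreach : ∀ x ∈ insert y (P : Set E), (fromEdgeSet s).Reachable x y := by
      rintro x (rfl | hx)
      · exact Reachable.refl _
      · rcases eq_or_ne x y with rfl | hxy
        · exact Reachable.refl _
        · refine Adj.reachable ?_
          rw [fromEdgeSet_adj]
          exact ⟨⟨x, hx, hxy, Sym2.eq_swap⟩, hxy⟩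
    exact fun x hx z hz => (hreach x hx).trans (hreach z hz).symm

lemma spanning_finite {V : Set E} (hV : V.Finite) :
    {G : SimpleGraph E | IsSpanningTreeOn V G}.Finite := by
  have h1 : {G : SimpleGraph E | IsSpanningTreeOn V G} ⊆
      SimpleGraph.fromEdgeSet '' {t : Set (Sym2 E) | t ⊆ ↑(hV.toFinset.sym2)} := by
    intro G hG
    exact ⟨G.edgeSet, edgeSet_subset_of_mem hV hG.1, fromEdgeSet_edgeSet G⟩
  exact Set.Finite.subset (Set.Finite.image _
    ((hV.toFinset.sym2 : Finset (Sym2 E)).finite_toSet.powerset)) h1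

lemma edgeSet_finite_of_mem {V : Set E} (hV : V.Finite) {T : SimpleGraph E}
    (hTV : ∀ ⦃x y : E⦄, T.Adj x y → x ∈ V ∧ y ∈ V) : T.edgeSet.Finite :=
  Set.Finite.subset (hV.toFinset.sym2 : Finset (Sym2 E)).finite_toSet
    (edgeSet_subset_of_mem hV hTV)

lemma exchange {V : Set E} (hV : V.Finite) {T : SimpleGraph E}
    (hT : IsSpanningTreeOn V T) {y u v : E} (hu : T.Adj y u) (hv : T.Adj y v)
    (huv : u ≠ v) :
    ∃ T' : SimpleGraph E, IsSpanningTreeOn V T' ∧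
      glength T' = glength T - edgeLen s(y, v) + edgeLen s(u, v) ∧
      T'.neighborSet y = T.neighborSet y \ {v} := by
  obtain ⟨hTV, hTacyc, hTconn⟩ := hT
  have hbr : ∀ ⦃e⦄, e ∈ T.edgeSet → T.IsBridge e :=
    isAcyclic_iff_forall_edge_isBridge.mp hTacyc
  have hdel : ∀ (G : SimpleGraph E) (s : Set (Sym2 E)), G \ fromEdgeSet s = G.deleteEdges s :=
    fun _ _ => rfl
  have hyu : y ≠ u := hu.ne
  have hyv : y ≠ v := hv.ne
  have hyV : y ∈ V := (hTV hu).1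
  have huV : u ∈ V := (hTV hu).2
  have hvV : v ∈ V := (hTV hv).2
  have hyuyv : s(y, u) ≠ s(y, v) := by
    intro h
    rcases Sym2.eq_iff.mp h with ⟨-, h2⟩ | ⟨h2, -⟩
    · exact huv h2
    · exact hyv h2
  have huvyv : s(u, v) ≠ s(y, v) := by
    intro h
    rcases Sym2.eq_iff.mp h with ⟨h1, -⟩ | ⟨h1, -⟩
    · exact hyu h1.symm
    · exact huv h1
  have huvyu : s(u, v) ≠ s(y, u) := by
    intro h
    rcases Sym2.eq_iff.mp h with ⟨h1, -⟩ | ⟨-, h2⟩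
    · exact hyu h1.symm
    · exact hyv h2.symm
  -- the bridge property of the two edges at `y`
  have hbyv : ¬(T.deleteEdges {s(y, v)}).Reachable y v := by
    exact isBridge_iff.mp (hbr ((mem_edgeSet _).mpr hv))
  have hbyu : ¬(T.deleteEdges {s(y, u)}).Reachable y u := by
    exact isBridge_iff.mp (hbr ((mem_edgeSet _).mpr hu))
  -- u and v are not adjacent in T
  have hno_uv : ¬T.Adj u v := by
    intro hadj
    apply hbyu
    have h1 : (T.deleteEdges {s(y, u)}).Adj y v := by
      rw [deleteEdges_adj]
      refine ⟨hv, ?_⟩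
      simp only [Set.mem_singleton_iff]
      exact fun h => hyuyv h.symm
    have h2 : (T.deleteEdges {s(y, u)}).Adj v u := by
      rw [deleteEdges_adj]
      refine ⟨hadj.symm, ?_⟩
      simp only [Set.mem_singleton_iff]
      exact fun h => huvyu (Sym2.eq_swap.trans h)
    exact h1.reachable.trans h2.reachable
  set T1 : SimpleGraph E := T.deleteEdges {s(y, v)} with hT1
  set T' : SimpleGraph E := T1 ⊔ fromEdgeSet {s(u, v)} with hT'def
  have hT'adj : ∀ a b : E, T'.Adj a b ↔
      ((T.Adj a b ∧ s(a, b) ≠ s(y, v)) ∨ (s(a, b) = s(u, v) ∧ a ≠ b)) := by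
    intro a b
    rw [hT'def, sup_adj, deleteEdges_adj, fromEdgeSet_adj]
    simp
  -- T1 adjacency facts
  have hT1yu : T1.Adj y u := by
    rw [hT1, deleteEdges_adj]; exact ⟨hu, by simpa using hyuyv⟩
  have hT1le : T1 ≤ T' := le_sup_left
  have hT'uv : T'.Adj u v := by
    rw [hT'adj]; exact Or.inr ⟨rfl, huv⟩
  -- Edge containment in V
  have hT'V : ∀ ⦃a b : E⦄, T'.Adj a b → a ∈ V ∧ b ∈ V := by
    intro a b hab
    rcases (hT'adj a b).mp hab with ⟨h1, _⟩ | ⟨h1, _⟩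
    · exact hTV h1
    · rw [Sym2.eq_iff] at h1
      rcases h1 with ⟨rfl, rfl⟩ | ⟨rfl, rfl⟩
      · exact ⟨huV, hvV⟩
      · exact ⟨hvV, huV⟩
  -- Connectivity
  have hreachy : ∀ x ∈ V, T'.Reachable x y := by
    intro x hx
    obtain ⟨p⟩ := hTconn x hx y hyV
    rcases reach_delete_cases (v := y) (w := v) p with h' | h' | h'
    · exact (h'.mono hT1le)
    · exact (h'.mono hT1le)
    · refine ((h'.mono hT1le).trans ?_)
      exact (hT'uv.symm.reachable).trans (hT1yu.symm.reachable.mono hT1le)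
  have hT'conn : ∀ x ∈ V, ∀ z ∈ V, T'.Reachable x z :=
    fun x hx z hz => (hreachy x hx).trans (hreachy z hz).symm
  -- Acyclicity: every edge of T' is a bridge
  have hT'acyc : T'.IsAcyclic := by
    rw [isAcyclic_iff_forall_adj_isBridge]
    intro a b hab
    rw [isBridge_iff]
    by_cases hcase : s(a, b) = s(u, v)
    · -- the new edge is a bridge
      intro hr
      have hle : T'.deleteEdges {s(a, b)} ≤ T1 := by
        intro x z hxz
        rw [deleteEdges_adj, hT'adj] at hxz
        rcases hxz with ⟨⟨h1, h2⟩ | ⟨h1, _⟩, h3⟩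
        · rw [hT1, deleteEdges_adj]; exact ⟨h1, by simpa using h2⟩
        · exact absurd (h1.trans hcase.symm) (by simpa using h3)
      have hruv : T1.Reachable a b := hr.mono hle
      -- derive y ~ v in T1
      apply hbyv
      rw [Sym2.eq_iff] at hcase
      rcases hcase with ⟨rfl, rfl⟩ | ⟨rfl, rfl⟩
      · exact hT1yu.reachable.trans hruv
      · exact hT1yu.reachable.trans hruv.symm
    · -- an old edge
      have hTadj : T.Adj a b ∧ s(a, b) ≠ s(y, v) := by
        rcases (hT'adj a b).mp hab with h | h
        · exact h
        · exact absurd h.1 hcase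
      obtain ⟨hTab, habyv⟩ := hTadj
      have hbab : ¬(T.deleteEdges {s(a, b)}).Reachable a b := by
        exact isBridge_iff.mp (hbr ((mem_edgeSet _).mpr hTab))
      intro hr
      -- rewrite the graph as (T minus both edges) plus the new edge
      have hEq : T'.deleteEdges {s(a, b)} =
          (T.deleteEdges {s(y, v), s(a, b)}) ⊔ fromEdgeSet {s(u, v)} := by
        ext x z
        rw [deleteEdges_adj, hT'adj, sup_adj, deleteEdges_adj, fromEdgeSet_adj]
        have habuv : s(u, v) ≠ s(a, b) := by
          intro h
          apply hno_uv
          rw [← mem_edgeSet, h, mem_edgeSet]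
          exact hTab
        constructor
        · rintro ⟨h1 | h1, h2⟩
          · refine Or.inl ⟨h1.1, ?_⟩
            simp only [Set.mem_insert_iff, Set.mem_singleton_iff] at h1 h2 ⊢
            push_neg
            exact ⟨h1.2, h2⟩
          · exact Or.inr ⟨h1.1, h1.2⟩
        · rintro (⟨h1, h2⟩ | ⟨h1, h2⟩)
          · simp only [Set.mem_insert_iff, Set.mem_singleton_iff] at h2
            push_neg at h2
            refine ⟨Or.inl ⟨h1, by simp [h2.1]⟩, by simp [h2.2]⟩
          · have h1' : s(x, z) = s(u, v) := by simpa using h1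
            refine ⟨Or.inr ⟨h1, h2⟩, ?_⟩
            simp only [Set.mem_singleton_iff]
            rw [h1']
            exact habuv
      rw [hEq] at hr
      obtain ⟨p⟩ := hr
      have hGle1 : T.deleteEdges {s(y, v), s(a, b)} ≤ T.deleteEdges {s(a, b)} := by
        intro x z hxz
        rw [deleteEdges_adj] at hxz ⊢
        refine ⟨hxz.1, ?_⟩
        have := hxz.2
        simp only [Set.mem_insert_iff, Set.mem_singleton_iff] at this ⊢
        push_neg at this
        exact this.2
      have hGle2 : T.deleteEdges {s(y, v), s(a, b)} ≤ T.deleteEdges {s(y, v)} := by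
        intro x z hxz
        rw [deleteEdges_adj] at hxz ⊢
        refine ⟨hxz.1, ?_⟩
        have := hxz.2
        simp only [Set.mem_insert_iff, Set.mem_singleton_iff] at this ⊢
        push_neg at this
        exact this.1
      have hadj_yu : s(y, u) ≠ s(a, b) →  (T.deleteEdges {s(a, b)}).Adj y u := by
        intro hne
        rw [deleteEdges_adj]
        exact ⟨hu, by simpa using hne⟩
      have hadj_yv : (T.deleteEdges {s(a, b)}).Adj y v := by
        rw [deleteEdges_adj]
        exact ⟨hv, by simpa using (Ne.symm habyv)⟩
      rcases reach_sup_cases p with h' | ⟨h1, h2⟩ | ⟨h1, h2⟩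
      · exact hbab (h'.mono hGle1)
      · by_cases hyue : s(y, u) = s(a, b)
        · rcases Sym2.eq_iff.mp hyue with ⟨hya, hub⟩ | ⟨hyb, hua⟩
          · subst hya; subst hub; exact hbab (h1.mono hGle1)
          · subst hyb; subst hua; exact hbyv ((h2.mono hGle2).symm)
        · exact hbab ((h1.mono hGle1).trans (((hadj_yu hyue).symm.reachable).trans
            (hadj_yv.reachable.trans (h2.mono hGle1))))
      · by_cases hyue : s(y, u) = s(a, b)
        · rcases Sym2.eq_iff.mp hyue with ⟨hya, hub⟩ | ⟨hyb, hua⟩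
          · subst hya; subst hub; exact hbyv (h1.mono hGle2)
          · subst hyb; subst hua; exact hbab (h2.mono hGle1)
        · exact hbab ((h1.mono hGle1).trans ((hadj_yv.symm.reachable).trans
            (((hadj_yu hyue).reachable).trans (h2.mono hGle1))))
  -- edge set computation
  have hTfin : T.edgeSet.Finite := edgeSet_finite_of_mem hV hTV
  have heyv_mem : s(y, v) ∈ T.edgeSet := (mem_edgeSet _).mpr hv
  have heuv_not : s(u, v) ∉ T.edgeSet := fun h => hno_uv ((mem_edgeSet _).mp h)
  have hT'edges : T'.edgeSet = (T.edgeSet \ {s(y, v)}) ∪ {s(u, v)} := by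
    rw [hT'def, edgeSet_sup, hT1, edgeSet_deleteEdges, edgeSet_fromEdgeSet]
    congr 1
    ext e
    simp only [Set.mem_diff, Set.mem_singleton_iff, Set.mem_setOf_eq]
    constructor
    · exact fun h => h.1
    · rintro rfl
      exact ⟨rfl, by simpa using huv⟩
  have hdisj : s(u, v) ∉ T.edgeSet \ {s(y, v)} := fun h => heuv_not h.1
  have hsplit : glength T = (∑ᶠ e ∈ T.edgeSet \ {s(y, v)}, edgeLen e) + edgeLen s(y, v) := by
    rw [glength]
    conv_lhs => rw [← Set.diff_union_of_subset (Set.singleton_subset_iff.mpr heyv_mem)]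
    rw [finsum_mem_union (by simp) hTfin.diff (Set.finite_singleton _),
      finsum_mem_singleton]
  have hT'len : glength T' = (∑ᶠ e ∈ T.edgeSet \ {s(y, v)}, edgeLen e) + edgeLen s(u, v) := by
    rw [glength, hT'edges,
      finsum_mem_union (by simpa using hdisj) hTfin.diff (Set.finite_singleton _),
      finsum_mem_singleton]
  have hnbr : T'.neighborSet y = T.neighborSet y \ {v} := by
    ext z
    simp only [mem_neighborSet, Set.mem_diff, Set.mem_singleton_iff]
    rw [hT'adj]
    constructor
    · rintro (⟨h1, h2⟩ | ⟨h1, h2⟩)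
      · refine ⟨h1, ?_⟩
        rintro rfl
        exact h2 rfl
      · exfalso
        rcases Sym2.eq_iff.mp h1 with ⟨h3, _⟩ | ⟨h3, _⟩
        · exact hyu h3
        · exact hyv h3
    · rintro ⟨h1, h2⟩
      refine Or.inl ⟨h1, ?_⟩
      intro h
      rcases Sym2.eq_iff.mp h with ⟨-, h3⟩ | ⟨h3, -⟩
      · exact h2 h3
      · exact hyv h3
  exact ⟨T', ⟨hT'V, hT'acyc, hT'conn⟩, by rw [hT'len, hsplit]; ring, hnbr⟩

theorem stmt16 (E : Type*) [NormedAddCommGroup E] [NormedSpace ℝ E]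
    (hdim : Module.finrank ℝ E = 2)
    (P : Finset E) (hP : P.Nonempty) (y : E) :
    ∃ T : SimpleGraph E, IsMSTOn (insert y ↑P) T ∧ (T.neighborSet y).ncard ≤ 6 := by
  set V : Set E := insert y ↑P with hVdef
  have hVfin : V.Finite := (P.finite_toSet).insert y
  set S : Set (SimpleGraph E) := {G | IsSpanningTreeOn V G} with hSdef
  have hSfin : S.Finite := spanning_finite hVfin
  have hSne : S.Nonempty := star_spanning P y
  obtain ⟨T0, hT0S, hT0min⟩ := Set.exists_min_image S glength hSfin hSne
  set M : Set (SimpleGraph E) := {G | IsMSTOn V G} with hMdef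
  have hMfin : M.Finite := hSfin.subset (fun G hG => hG.1)
  have hMne : M.Nonempty := ⟨T0, hT0S, hT0min⟩
  obtain ⟨T, hTM, hTmin⟩ :=
    Set.exists_min_image M (fun G => (G.neighborSet y).ncard) hMfin hMne
  refine ⟨T, hTM, ?_⟩
  by_contra h6
  push_neg at h6
  have h7 : 7 ≤ (T.neighborSet y).ncard := h6
  set N : Set E := T.neighborSet y with hNdef
  have hNsub : N ⊆ V := fun z hz => (hTM.1.1 hz).2
  have hNfin : N.Finite := hVfin.subset hNsub
  -- pick seven distinct neighbours
  obtain ⟨s7, hs7sub, hs7card⟩ := Finset.exists_subset_card_eq (s := hNfin.toFinset) (n := 7)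
    (by rwa [← Set.ncard_eq_toFinset_card N hNfin])
  have e7 := s7.equivFinOfCardEq hs7card
  set f : Fin 7 → E := fun i => ((e7.symm i : s7) : E) with hfdef
  have hfinj : Function.Injective f :=
    fun i j hij => (Equiv.injective e7.symm) (Subtype.coe_injective hij)
  have hfN : ∀ i, f i ∈ N := by
    intro i
    have := (e7.symm i).2
    have := hs7sub this
    rwa [Set.Finite.mem_toFinset] at this
  have hfadj : ∀ i, T.Adj y (f i) := fun i => hfN i
  have hfne : ∀ i, f i ≠ y := fun i => (hfadj i).ne'
  obtain ⟨i, j, hij, hle⟩ := seven_main hdim (fun i => f i - y)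
    (fun i => sub_ne_zero.mpr (hfne i))
    (fun i j hij => hfinj (by simpa [sub_left_injective] using hij))
  have hdiff : (f i - y) - (f j - y) = f i - f j := by module
  rw [hdiff] at hle
  -- choose which of the two gets the longer edge
  have key : ∀ u v : E, T.Adj y u → T.Adj y v → u ≠ v →
      ‖u - v‖ ≤ ‖v - y‖ → False := by
    intro u v hu hv huv hlen
    obtain ⟨T', hT'span, hT'len, hT'nbr⟩ := exchange hVfin hTM.1 hu hv huv
    have hlen' : edgeLen s(u, v) ≤ edgeLen s(y, v) := by
      show dist u v ≤ dist y v
      rw [dist_eq_norm, dist_eq_norm, norm_sub_rev y v]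
      exact hlen
    have hT'M : IsMSTOn V T' := by
      refine ⟨hT'span, fun H hH => ?_⟩
      have h1 : glength T' ≤ glength T := by rw [hT'len]; linarith
      exact h1.trans (hTM.2 H hH)
    have hvN : v ∈ T.neighborSet y := hv
    have hlt : (T'.neighborSet y).ncard < (T.neighborSet y).ncard := by
      rw [hT'nbr]
      exact Set.ncard_diff_singleton_lt_of_mem hvN hNfin
    exact absurd (hTmin T' hT'M) (not_le.mpr hlt)
  rcases max_cases ‖f i - y‖ ‖f j - y‖ with ⟨hmax, -⟩ | ⟨hmax, -⟩
  · rw [hmax] at hle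
    exact key (f j) (f i) (hfadj j) (hfadj i) (fun h => hij (hfinj h).symm)
      (by rwa [norm_sub_rev])
  · rw [hmax] at hle
    exact key (f i) (f j) (hfadj i) (hfadj j) (fun h => hij (hfinj h)) hle

end
end

section
/- Let E be a real normed vector space of dimension 2 (finrank ℝ E = 2), let α : Multiset ℝ → ℝ be a cost function, let P be a finite subset of E, and let k be a natural number. Suppose (ℓ₁-optimizability) there exist a finite set S* ⊂ E with |S*| ≤ k and a spanning tree T* of P ∪ S* such that (a) the α-cost of T* is less than or equal to the α-cost of τ for every finite S ⊂ E with |S| ≤ k and every spanning tree τ of P ∪ S, and (b) T* has minimum total edge length among all spanning trees of P ∪ S*. Then every spanning tree of P ∪ S* of minimum total edge length has α-cost equal to the α-cost of T*; that is, every minimum spanning tree of P ∪ S* is a minimum k-Steiner tree of P with respect to α. -/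
open scoped BigOperators

noncomputable section

variable {E : Type*} [NormedAddCommGroup E]

open Classical in
/-- The `α`-cost of a graph: `α` applied to the multiset of its edge lengths
(junk value `0` if the edge set is infinite, which never occurs for spanning
trees of finite sets). -/
def gcost (α : Multiset ℝ → ℝ) (G : SimpleGraph E) : ℝ :=
  if h : G.edgeSet.Finite then α (h.toFinset.val.map edgeLen) else 0

section Aux

open SimpleGraph

variable {E : Type*} [NormedAddCommGroup E]

lemma edgeLen_mk (a b : E) : edgeLen s(a, b) = dist a b := rfl

lemma edgeLen_pos {a b : E} (h : a ≠ b) : 0 < edgeLen s(a, b) := by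
  simpa [edgeLen_mk] using dist_pos.2 h

/-- A graph whose edges join points of a finite set has finitely many edges. -/
lemma edgeSet_finite_of_subset {V : Set E} (hV : V.Finite) {G : SimpleGraph E}
    (hG : ∀ ⦃x y : E⦄, G.Adj x y → x ∈ V ∧ y ∈ V) : G.edgeSet.Finite := by
  refine Set.Finite.subset ((hV.prod hV).image (fun p => s(p.1, p.2))) ?_
  intro e he
  induction e using Sym2.ind with
  | _ a b => exact ⟨(a, b), ⟨(hG he).1, (hG he).2⟩, rfl⟩

lemma glength_eq {G : SimpleGraph E} (h : G.edgeSet.Finite) :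
    glength G = ∑ e ∈ h.toFinset, edgeLen e := by
  have h2 := finsum_mem_coe_finset (s := h.toFinset) (f := edgeLen)
  rw [h.coe_toFinset] at h2
  rw [glength, h2]

/-- If every edge of `G` has its endpoints reachable in `H`, then `G`-reachability
implies `H`-reachability. -/
lemma reachable_transfer {G H : SimpleGraph E}
    (h : ∀ ⦃c d : E⦄, G.Adj c d → H.Reachable c d) {a b : E}
    (hr : G.Reachable a b) : H.Reachable a b := by
  obtain ⟨p⟩ := hr
  induction p with
  | nil => exact Reachable.refl _
  | cons ha _ ih => exact (h ha).trans ih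

lemma reachable_side_aux {G : SimpleGraph E} (u v : E) {w z : E} (p : G.Walk w z)
    (hz : (G.deleteEdges {s(u, v)}).Reachable z u ∨ (G.deleteEdges {s(u, v)}).Reachable z v) :
    (G.deleteEdges {s(u, v)}).Reachable w u ∨ (G.deleteEdges {s(u, v)}).Reachable w v := by
  induction p with
  | nil => exact hz
  | @cons w a _ ha _ ih =>
    by_cases hf : s(w, a) = s(u, v)
    · rw [Sym2.eq_iff] at hf
      rcases hf with ⟨rfl, rfl⟩ | ⟨rfl, rfl⟩
      · exact Or.inl (Reachable.refl _)
      · exact Or.inr (Reachable.refl _)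
    · have hadj : (G.deleteEdges {s(u, v)}).Adj w a := by
        simp only [SimpleGraph.deleteEdges_adj, Set.mem_singleton_iff]
        exact ⟨ha, hf⟩
      rcases ih hz with h | h
      · exact Or.inl (hadj.reachable.trans h)
      · exact Or.inr (hadj.reachable.trans h)

/-- After deleting a single edge `s(u,v)` from `G`, every vertex that could reach `u`
can still reach `u` or `v`. -/
lemma reachable_side {G : SimpleGraph E} (u v : E) {w : E} (hr : G.Reachable w u) :
    (G.deleteEdges {s(u, v)}).Reachable w u ∨ (G.deleteEdges {s(u, v)}).Reachable w v := by
  obtain ⟨p⟩ := hr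
  exact reachable_side_aux u v p (Or.inl (Reachable.refl _))

/-- In an acyclic graph, deleting an edge of a path disconnects its endpoints. -/
lemma not_reachable_deleteEdges {G : SimpleGraph E} (hG : G.IsAcyclic) {x y : E}
    (p : G.Walk x y) (hp : p.IsPath) {f : Sym2 E} (hf : f ∈ p.edges) :
    ¬(G.deleteEdges {f}).Reachable x y := by
  classical
  rintro ⟨q⟩
  have hq' : ∀ e ∈ (q.mapLe (SimpleGraph.deleteEdges_le _)).edges, e ≠ f := by
    intro e he
    rw [SimpleGraph.Walk.mapLe, SimpleGraph.Walk.edges_map] at he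
    obtain ⟨e', he', rfl⟩ := List.mem_map.mp he
    have := q.edges_subset_edgeSet he'
    rw [SimpleGraph.edgeSet_deleteEdges] at this
    simpa using this.2
  set q' : G.Walk x y := q.mapLe (SimpleGraph.deleteEdges_le _) with hq'def
  have hpq : (⟨p, hp⟩ : G.Path x y) = q'.toPath := hG.path_unique _ _
  have : f ∈ (q'.toPath : G.Walk x y).edges := by rw [← hpq]; exact hf
  exact hq' f (q'.edges_toPath_subset this) rfl

/-- Along any walk between `H`-unreachable endpoints there is an edge whose endpoints
are `H`-unreachable. -/
lemma exists_bad_edge {G H : SimpleGraph E} {x y : E} (p : G.Walk x y)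
    (hxy : ¬H.Reachable x y) :
    ∃ u v : E, G.Adj u v ∧ s(u, v) ∈ p.edges ∧ ¬H.Reachable u v := by
  induction p with
  | nil => exact absurd (Reachable.refl _) hxy
  | @cons w a _ ha q ih =>
    by_cases hr : H.Reachable w a
    · obtain ⟨u, v, h1, h2, h3⟩ := ih (fun h => hxy (hr.trans h))
      exact ⟨u, v, h1, by simp [h2], h3⟩
    · exact ⟨w, a, ha, by simp, hr⟩

lemma edgeSet_swap {T' : SimpleGraph E} {u v x y : E} (hxy : x ≠ y) :
    ((T'.deleteEdges {s(u, v)}) ⊔ SimpleGraph.edge x y).edgeSet =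
      (T'.edgeSet \ {s(u, v)}) ∪ {s(x, y)} := by
  rw [SimpleGraph.edgeSet_sup, SimpleGraph.edgeSet_deleteEdges,
    SimpleGraph.edge_edgeSet_of_ne hxy]

/-- The exchange step: removing an edge `s(u,v)` of a spanning tree and adding an
edge `s(x,y)` whose endpoints got disconnected yields a spanning tree again. -/
lemma exchange_isSpanningTree {V : Set E} {T' : SimpleGraph E}
    (hT' : IsSpanningTreeOn V T') {u v x y : E} (hf : s(u, v) ∈ T'.edgeSet)
    (hx : x ∈ V) (hy : y ∈ V) (hxy : x ≠ y)
    (hnr : ¬(T'.deleteEdges {s(u, v)}).Reachable x y) :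
    IsSpanningTreeOn V ((T'.deleteEdges {s(u, v)}) ⊔ SimpleGraph.edge x y) := by
  set D := T'.deleteEdges {s(u, v)} with hD
  set T'' := D ⊔ SimpleGraph.edge x y with hT''def
  have hDle : D ≤ T' := SimpleGraph.deleteEdges_le _
  have hT''adj : ∀ ⦃c d : E⦄, T''.Adj c d → D.Adj c d ∨ s(c, d) = s(x, y) := by
    intro c d hcd
    rcases hcd with h | h
    · exact Or.inl h
    · rw [SimpleGraph.edge_adj] at h
      rcases h.1 with ⟨rfl, rfl⟩ | ⟨rfl, rfl⟩
      · exact Or.inr rfl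
      · exact Or.inr (Sym2.eq_swap)
  have hT''edge : T''.edgeSet = D.edgeSet ∪ {s(x, y)} := by
    rw [hT''def, SimpleGraph.edgeSet_sup, SimpleGraph.edge_edgeSet_of_ne hxy]
  refine ⟨?_, ?_, ?_⟩
  · intro c d hcd
    rcases hT''adj hcd with h | h
    · exact hT'.1 (hDle h)
    · rw [Sym2.eq_iff] at h
      rcases h with ⟨rfl, rfl⟩ | ⟨rfl, rfl⟩
      · exact ⟨hx, hy⟩
      · exact ⟨hy, hx⟩
  · -- acyclicity
    intro a c hc
    by_cases he : s(x, y) ∈ c.edges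
    · have h2 := (SimpleGraph.adj_and_reachable_delete_edges_iff_exists_cycle.mpr
        ⟨a, c, hc, he⟩).2
      have hle : (T'' \ SimpleGraph.fromEdgeSet {s(x, y)}) ≤ D := by
        intro c d hcd
        obtain ⟨h1, h2'⟩ := hcd
        rcases hT''adj h1 with h | h
        · exact h
        · exact absurd h (by simpa [SimpleGraph.fromEdgeSet_adj, h1.ne] using h2')
      exact hnr (reachable_transfer (fun c d h => (hle h).reachable) h2)
    · have hce : ∀ e ∈ c.edges, e ∈ D.edgeSet := by
        intro e hec
        have h1 : e ∈ T''.edgeSet := c.edges_subset_edgeSet hec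
        rw [hT''edge] at h1
        rcases h1 with h1 | h1
        · exact h1
        · exact absurd (h1 ▸ hec) he
      exact hT'.2.1 ((c.transfer D hce).mapLe hDle) ((hc.transfer hce).mapLe hDle)
  · -- connectivity
    have hruv : T''.Reachable u v := by
      have hu : u ∈ V := (hT'.1 hf).1
      have hv : v ∈ V := (hT'.1 hf).2
      have hxside := reachable_side u v (hT'.2.2 x hx u hu)
      have hyside := reachable_side u v (hT'.2.2 y hy u hu)
      have hDT'' : D ≤ T'' := le_sup_left
      have hexy : T''.Adj x y := Or.inr (by simp [SimpleGraph.edge_adj, hxy])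
      rcases hxside with h1 | h1 <;> rcases hyside with h2 | h2
      · exact absurd (h1.trans h2.symm) hnr
      · exact (reachable_transfer (fun c d h => (hDT'' h).reachable) h1).symm.trans
          (hexy.reachable.trans (reachable_transfer (fun c d h => (hDT'' h).reachable) h2))
      · exact ((reachable_transfer (fun c d h => (hDT'' h).reachable) h1).symm.trans
          (hexy.reachable.trans (reachable_transfer (fun c d h => (hDT'' h).reachable) h2))).symm
      · exact absurd (h1.trans h2.symm) hnr
    intro a haV b hbV
    refine reachable_transfer (G := T') ?_ (hT'.2.2 a haV b hbV)
    intro c d hcd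
    by_cases hcduv : s(c, d) = s(u, v)
    · rw [Sym2.eq_iff] at hcduv
      rcases hcduv with ⟨rfl, rfl⟩ | ⟨rfl, rfl⟩
      · exact hruv
      · exact hruv.symm
    · exact SimpleGraph.Adj.reachable (Or.inl (by
        simp only [hD, SimpleGraph.deleteEdges_adj, Set.mem_singleton_iff]
        exact ⟨hcd, hcduv⟩))

/-- All minimum spanning trees of a finite point set have the same multiset of
edge lengths. -/
lemma mst_multiset_eq {V : Set E} (hV : V.Finite) {T : SimpleGraph E}
    (hT : IsSpanningTreeOn V T)
    (hminT : ∀ τ : SimpleGraph E, IsSpanningTreeOn V τ → glength T ≤ glength τ)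
    (hfT : T.edgeSet.Finite) :
    ∀ n (T' : SimpleGraph E), IsSpanningTreeOn V T' →
      (∀ τ : SimpleGraph E, IsSpanningTreeOn V τ → glength T' ≤ glength τ) →
      ∀ (hfT' : T'.edgeSet.Finite), (T'.edgeSet \ T.edgeSet).ncard = n →
      hfT.toFinset.val.map edgeLen = hfT'.toFinset.val.map edgeLen := by
  classical
  intro n
  induction n with
  | zero =>
    intro T' hT' hminT' hfT' hcard
    -- `T'.edgeSet ⊆ T.edgeSet`
    have hsub : T'.edgeSet ⊆ T.edgeSet := by
      have := (Set.ncard_eq_zero (hfT'.diff (t := T.edgeSet))).mp hcard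
      intro e he
      by_contra hne
      have : e ∈ T'.edgeSet \ T.edgeSet := ⟨he, hne⟩
      rw [(Set.ncard_eq_zero (hfT'.diff (t := T.edgeSet))).mp hcard] at this
      exact this
    -- if not equal, delete an extra edge from `T` to get a shorter spanning tree
    have heq : T.edgeSet = T'.edgeSet := by
      by_contra hne
      have hss : ∃ g ∈ T.edgeSet, g ∉ T'.edgeSet := by
        by_contra h
        push_neg at h
        exact hne (le_antisymm h hsub)
      obtain ⟨g, hgT, hgT'⟩ := hss
      induction g using Sym2.ind with
      | _ a b =>
        have hab : a ≠ b := (T.mem_edgeSet.mp hgT).ne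
        set Tg := T.deleteEdges {s(a, b)} with hTg
        have hTgfin : Tg.edgeSet.Finite := by
          refine hfT.subset ?_
          rw [SimpleGraph.edgeSet_deleteEdges]
          exact Set.diff_subset
        have hTgst : IsSpanningTreeOn V Tg := by
          refine ⟨fun c d h => hT.1 (SimpleGraph.deleteEdges_le _ h), ?_, ?_⟩
          · intro w c hc
            exact hT.2.1 (c.mapLe (SimpleGraph.deleteEdges_le _)) (hc.mapLe _)
          · intro c hc d hd
            refine reachable_transfer (G := T') ?_ (hT'.2.2 c hc d hd)
            intro c' d' h
            have hmem : s(c', d') ∈ T'.edgeSet := h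
            have hmem2 : s(c', d') ∈ T.edgeSet := hsub hmem
            refine SimpleGraph.Adj.reachable ?_
            simp only [hTg, SimpleGraph.deleteEdges_adj, Set.mem_singleton_iff]
            exact ⟨hmem2, fun hcd => hgT' (hcd ▸ hmem)⟩
        have hTgfinset : hTgfin.toFinset = hfT.toFinset.erase s(a, b) := by
          ext e
          simp [Set.Finite.mem_toFinset, hTg, SimpleGraph.edgeSet_deleteEdges, and_comm]
        have hlen : glength Tg = glength T - edgeLen s(a, b) := by
          rw [glength_eq hTgfin, glength_eq hfT, hTgfinset,
            Finset.sum_erase_eq_sub (by simp [Set.Finite.mem_toFinset, hgT])]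
        have h1 := hminT Tg hTgst
        have h2 := edgeLen_pos hab
        linarith
    have hfin : hfT.toFinset = hfT'.toFinset := by
      ext g
      simp [Set.Finite.mem_toFinset, heq]
    rw [hfin]
  | succ n ih =>
    intro T' hT' hminT' hfT' hcard
    -- `T \ T'` is nonempty
    have hTT' : ∃ e ∈ T.edgeSet, e ∉ T'.edgeSet := by
      by_contra h
      push_neg at h
      -- then `T ≤ T'`, and `T' \ T` is nonempty; delete one of its edges from `T'`
      have hne : (T'.edgeSet \ T.edgeSet).Nonempty :=
        Set.nonempty_of_ncard_ne_zero (by omega)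
      obtain ⟨g, hgT', hgT⟩ := hne
      induction g using Sym2.ind with
      | _ a b =>
        have hab : a ≠ b := (T'.mem_edgeSet.mp hgT').ne
        set Tg := T'.deleteEdges {s(a, b)} with hTg
        have hTgfin : Tg.edgeSet.Finite := by
          refine hfT'.subset ?_
          rw [SimpleGraph.edgeSet_deleteEdges]
          exact Set.diff_subset
        have hTgst : IsSpanningTreeOn V Tg := by
          refine ⟨fun c d h' => hT'.1 (SimpleGraph.deleteEdges_le _ h'), ?_, ?_⟩
          · intro w c hc
            exact hT'.2.1 (c.mapLe (SimpleGraph.deleteEdges_le _)) (hc.mapLe _)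
          · intro c hc d hd
            refine reachable_transfer (G := T) ?_ (hT.2.2 c hc d hd)
            intro c' d' h'
            have hmem : s(c', d') ∈ T.edgeSet := h'
            have hmem2 : s(c', d') ∈ T'.edgeSet := h _ hmem
            refine SimpleGraph.Adj.reachable ?_
            simp only [hTg, SimpleGraph.deleteEdges_adj, Set.mem_singleton_iff]
            exact ⟨hmem2, fun hcd => hgT (hcd ▸ hmem)⟩
        have hTgfinset : hTgfin.toFinset = hfT'.toFinset.erase s(a, b) := by
          ext e
          simp [Set.Finite.mem_toFinset, hTg, SimpleGraph.edgeSet_deleteEdges, and_comm]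
        have hlen : glength Tg = glength T' - edgeLen s(a, b) := by
          rw [glength_eq hTgfin, glength_eq hfT', hTgfinset,
            Finset.sum_erase_eq_sub (by simp [Set.Finite.mem_toFinset, hgT'])]
        have h1 := hminT' Tg hTgst
        have h2 := edgeLen_pos hab
        linarith
    obtain ⟨e, heT, heT'⟩ := hTT'
    induction e using Sym2.ind with
    | _ x y =>
      have hxy : x ≠ y := (T.mem_edgeSet.mp heT).ne
      have hx : x ∈ V := (hT.1 heT).1
      have hy : y ∈ V := (hT.1 heT).2
      -- deleting e from T disconnects x from y
      have hnrxy : ¬(T.deleteEdges {s(x, y)}).Reachable x y := by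
        refine not_reachable_deleteEdges hT.2.1
          (SimpleGraph.Path.singleton heT : T.Path x y).1
          (SimpleGraph.Path.singleton heT).2 ?_
        simp [SimpleGraph.Path.singleton]
        exact List.mem_cons_self ..
      -- take the T'-path from x to y
      obtain ⟨p0⟩ := hT'.2.2 x hx y hy
      set p := p0.toPath with hp
      obtain ⟨u, v, huv, hfp, hnruv⟩ := exists_bad_edge (H := T.deleteEdges {s(x, y)})
        (p : T'.Walk x y) hnrxy
      have hfT'mem : s(u, v) ∈ T'.edgeSet := huv
      have hfnotT : s(u, v) ∉ T.edgeSet := by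
        intro hmem
        have hne : s(u, v) ≠ s(x, y) := fun h => heT' (h ▸ hfT'mem)
        exact hnruv (SimpleGraph.Adj.reachable (by
          simp only [SimpleGraph.deleteEdges_adj, Set.mem_singleton_iff]
          exact ⟨hmem, hne⟩))
      have huV : u ∈ V := (hT'.1 huv).1
      have hvV : v ∈ V := (hT'.1 huv).2
      have huvne : u ≠ v := huv.ne
      -- T1 := T' - f + e is a spanning tree
      have hnr1 : ¬(T'.deleteEdges {s(u, v)}).Reachable x y :=
        not_reachable_deleteEdges hT'.2.1 (p : T'.Walk x y) p.2 hfp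
      set T1 := (T'.deleteEdges {s(u, v)}) ⊔ SimpleGraph.edge x y with hT1
      have hT1st : IsSpanningTreeOn V T1 :=
        exchange_isSpanningTree hT' hfT'mem hx hy hxy hnr1
      have hT1edge : T1.edgeSet = (T'.edgeSet \ {s(u, v)}) ∪ {s(x, y)} :=
        edgeSet_swap hxy
      have hfT1 : T1.edgeSet.Finite := by
        rw [hT1edge]
        exact (hfT'.diff (t := _)).union (Set.finite_singleton _)
      have hT1finset : hfT1.toFinset = insert s(x, y) (hfT'.toFinset.erase s(u, v)) := by
        ext g
        simp only [Set.Finite.mem_toFinset, hT1edge, Set.mem_union, Set.mem_diff,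
          Set.mem_singleton_iff, Finset.mem_insert, Finset.mem_erase,
          Set.Finite.mem_toFinset]
        tauto
      -- T2 := T - e + f is a spanning tree
      set T2 := (T.deleteEdges {s(x, y)}) ⊔ SimpleGraph.edge u v with hT2
      have hT2st : IsSpanningTreeOn V T2 :=
        exchange_isSpanningTree hT heT huV hvV huvne hnruv
      have hT2edge : T2.edgeSet = (T.edgeSet \ {s(x, y)}) ∪ {s(u, v)} :=
        edgeSet_swap huvne
      have hfT2 : T2.edgeSet.Finite := by
        rw [hT2edge]
        exact (hfT.diff (t := _)).union (Set.finite_singleton _)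
      have hT2finset : hfT2.toFinset = insert s(u, v) (hfT.toFinset.erase s(x, y)) := by
        ext g
        simp only [Set.Finite.mem_toFinset, hT2edge, Set.mem_union, Set.mem_diff,
          Set.mem_singleton_iff, Finset.mem_insert, Finset.mem_erase,
          Set.Finite.mem_toFinset]
        tauto
      -- length computations
      have hlen1 : glength T1 = glength T' - edgeLen s(u, v) + edgeLen s(x, y) := by
        rw [glength_eq hfT1, glength_eq hfT', hT1finset, Finset.sum_insert (by
          simp [Set.Finite.mem_toFinset, heT']),
          Finset.sum_erase_eq_sub (by simp [Set.Finite.mem_toFinset, hfT'mem])]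
        ring
      have hlen2 : glength T2 = glength T - edgeLen s(x, y) + edgeLen s(u, v) := by
        rw [glength_eq hfT2, glength_eq hfT, hT2finset, Finset.sum_insert (by
          simp [Set.Finite.mem_toFinset, hfnotT]),
          Finset.sum_erase_eq_sub (by simp [Set.Finite.mem_toFinset, heT])]
        ring
      have hineq1 := hminT' T1 hT1st
      have hineq2 := hminT T2 hT2st
      have hlene : edgeLen s(u, v) = edgeLen s(x, y) := by linarith
      -- T1 is also a minimum spanning tree with the same multiset as T'
      have hT1len : glength T1 = glength T' := by linarith
      have hminT1 : ∀ τ : SimpleGraph E, IsSpanningTreeOn V τ → glength T1 ≤ glength τ := by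
        intro τ hτ
        rw [hT1len]
        exact hminT' τ hτ
      have hcard1 : (T1.edgeSet \ T.edgeSet).ncard = n := by
        have hset : T1.edgeSet \ T.edgeSet =
            (T'.edgeSet \ T.edgeSet) \ {s(u, v)} := by
          rw [hT1edge]
          ext g
          simp only [Set.mem_diff, Set.mem_union, Set.mem_singleton_iff]
          constructor
          · rintro ⟨⟨hg1, hg2⟩ | rfl, hgT⟩
            · exact ⟨⟨hg1, hgT⟩, hg2⟩
            · exact absurd heT hgT
          · rintro ⟨⟨hg1, hgT⟩, hg2⟩
            exact ⟨Or.inl ⟨hg1, hg2⟩, hgT⟩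
        rw [hset, Set.ncard_diff_singleton_of_mem ((Set.mem_diff _).mpr ⟨hfT'mem, hfnotT⟩), hcard]
        omega
      have hmain := ih T1 hT1st hminT1 hfT1 hcard1
      -- finally, multiset of T1 = multiset of T'
      have hmset : hfT1.toFinset.val.map edgeLen = hfT'.toFinset.val.map edgeLen := by
        have hT'val : hfT'.toFinset.val = s(u, v) ::ₘ (hfT'.toFinset.val.erase s(u, v)) :=
          (Multiset.cons_erase (by
            rw [← Finset.mem_def]
            simp [Set.Finite.mem_toFinset, hfT'mem])).symm
        have hT1val : hfT1.toFinset.val = s(x, y) ::ₘ (hfT'.toFinset.val.erase s(u, v)) := by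
          rw [hT1finset, Finset.insert_val_of_notMem (by
            simp [Set.Finite.mem_toFinset, heT']), Finset.erase_val]
        rw [hT1val]
        conv_rhs => rw [hT'val]
        rw [Multiset.map_cons, Multiset.map_cons, hlene]
      rw [hmain, hmset]

end Aux

theorem stmt17 (E : Type*) [NormedAddCommGroup E] [NormedSpace ℝ E]
    (hdim : Module.finrank ℝ E = 2)
    (α : Multiset ℝ → ℝ) (P : Finset E) (k : ℕ)
    (Sstar : Finset E) (hSk : Sstar.card ≤ k)
    (Tstar : SimpleGraph E) (hTstar : IsSpanningTreeOn (↑P ∪ ↑Sstar) Tstar)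
    -- (a) `Tstar` has minimum `α`-cost among all `k`-Steiner trees of `P`
    (ha : ∀ S : Finset E, S.card ≤ k → ∀ τ : SimpleGraph E,
      IsSpanningTreeOn (↑P ∪ ↑S) τ → gcost α Tstar ≤ gcost α τ)
    -- (b) `Tstar` has minimum total length among spanning trees of `P ∪ Sstar`
    (hb : ∀ τ : SimpleGraph E,
      IsSpanningTreeOn (↑P ∪ ↑Sstar) τ → glength Tstar ≤ glength τ) :
    -- every minimum spanning tree of `P ∪ Sstar` has `α`-cost equal to that of
    -- `Tstar`, i.e. it is a minimum `k`-Steiner tree of `P` with respect to `α`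
    ∀ τ : SimpleGraph E, IsSpanningTreeOn (↑P ∪ ↑Sstar) τ →
      (∀ τ' : SimpleGraph E, IsSpanningTreeOn (↑P ∪ ↑Sstar) τ' →
        glength τ ≤ glength τ') →
      gcost α τ = gcost α Tstar ∧
        ∀ S : Finset E, S.card ≤ k → ∀ τ'' : SimpleGraph E,
          IsSpanningTreeOn (↑P ∪ ↑S) τ'' → gcost α τ ≤ gcost α τ'' := by
  intro τ hτ hτmin
  have hV : (↑P ∪ ↑Sstar : Set E).Finite := (P.finite_toSet).union (Sstar.finite_toSet)
  have hfτ : τ.edgeSet.Finite := edgeSet_finite_of_subset hV hτ.1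
  have hfT : Tstar.edgeSet.Finite := edgeSet_finite_of_subset hV hTstar.1
  have hmset := mst_multiset_eq hV hτ hτmin hfτ
    (Tstar.edgeSet \ τ.edgeSet).ncard Tstar hTstar hb hfT rfl
  have hcost : gcost α τ = gcost α Tstar := by
    rw [gcost, gcost, dif_pos hfτ, dif_pos hfT, hmset]
  refine ⟨hcost, fun S hS τ'' hτ'' => ?_⟩
  rw [hcost]
  exact ha S hS τ'' hτ''

end
end
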